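/- Kirk asymptotic fixed point theorem in relational metric spaces: Suppose (i) T is strongly (d,R)-asymptotic (∑_n d(T^n x,T^n y) < ∞ whenever xRy) and left (d,R)-continuous; (ii) X is (d,R)-complete (every R-ascending d-Cauchy sequence converges) and R is d-almost-selfclosed (any R-ascending sequence converging to z has a subsequence (w_n) with w_n R z for all n); (iii) T is R-increasing and there exists x0 with x0 R Tx0. Then for every x with x R Tx, the orbit (T^n x) converges in d to a point of Fix(T), and moreover any two fixed points related by the reflexive transitive closure of R ∪ R⁻¹ coincide. -/
import Mathlib


open Filter Topology

set_option maxHeartbeats 1000000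

/-- Kirk asymptotic fixed point theorem in relational metric spaces. -/
theorem stmt_3 {X : Type*} [MetricSpace X] (T : X → X) (R : X → X → Prop)
    (hrefl : ∀ x, R x x)
    -- (i) strongly (d,R)-asymptotic and left (d,R)-continuous
    (hasy : ∀ x y, R x y → Summable fun n => dist (T^[n] x) (T^[n] y))
    (hcont : ∀ (u : ℕ → X) (l : X), Tendsto u atTop (𝓝 l) → (∀ n, R (u n) l) →
      Tendsto (fun n => T (u n)) atTop (𝓝 (T l)))
    -- (ii) (d,R)-complete and R d-almost-selfclosed
    (hcompl : ∀ z : ℕ → X, (∀ n, R (z n) (z (n + 1))) → CauchySeq z →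
      ∃ l, Tendsto z atTop (𝓝 l))
    (hasc : ∀ (z : ℕ → X) (l : X), (∀ n, R (z n) (z (n + 1))) →
      Tendsto z atTop (𝓝 l) → ∃ φ : ℕ → ℕ, StrictMono φ ∧ ∀ n, R (z (φ n)) l)
    -- (iii) R-increasing and R-semi-progressive
    (hincr : ∀ x y, R x y → R (T x) (T y))
    (hprog : ∃ x0, R x0 (T x0)) :
    (∀ x, R x (T x) → ∃ z, T z = z ∧ Tendsto (fun n => T^[n] x) atTop (𝓝 z)) ∧
    (∀ z1 z2, T z1 = z1 → T z2 = z2 →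
      Relation.ReflTransGen (fun a b => R a b ∨ R b a) z1 z2 → z1 = z2) := by
  constructor
  · intro x hx
    set z : ℕ → X := fun n => T^[n] x with hz
    have hascend : ∀ n, R (z n) (z (n + 1)) := by
      intro n
      induction n with
      | zero => simpa [z] using hx
      | succ k ih =>
        have := hincr _ _ ih
        simpa [z, Function.iterate_succ_apply'] using this
    have hsum : Summable fun n => dist (z n) (z (n + 1)) := by
      have := hasy x (T x) hx
      simpa [z, Function.iterate_succ_apply] using this
    have hcauchy : CauchySeq z := cauchySeq_of_summable_dist hsum
    obtain ⟨l, hl⟩ := hcompl z hascend hcauchy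
    obtain ⟨φ, hφ, hR⟩ := hasc z l hascend hl
    have h1 : Tendsto (fun n => z (φ n)) atTop (𝓝 l) :=
      hl.comp hφ.tendsto_atTop
    have h2 : Tendsto (fun n => T (z (φ n))) atTop (𝓝 (T l)) :=
      hcont _ _ h1 hR
    have hφ1 : Tendsto (fun n => φ n + 1) atTop atTop :=
      (tendsto_add_atTop_nat 1).comp hφ.tendsto_atTop
    have h3 : Tendsto (fun n => z (φ n + 1)) atTop (𝓝 l) := hl.comp hφ1
    have heq : (fun n => T (z (φ n))) = fun n => z (φ n + 1) := by
      funext n; simp [z, Function.iterate_succ_apply']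
    rw [heq] at h2
    exact ⟨l, tendsto_nhds_unique h2 h3, hl⟩
  · intro z1 z2 h1 h2 hrel
    have key : ∀ a b, Relation.ReflTransGen (fun a b => R a b ∨ R b a) a b →
        Tendsto (fun n => dist (T^[n] a) (T^[n] b)) atTop (𝓝 0) := by
      intro a b hab
      induction hab with
      | refl => simpa using (tendsto_const_nhds : Tendsto (fun _ : ℕ => (0:ℝ)) atTop (𝓝 0))
      | @tail c d hbc hstep ih =>
        have hcd : Tendsto (fun n => dist (T^[n] c) (T^[n] d)) atTop (𝓝 0) := by
          rcases hstep with h | h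
          · exact (hasy _ _ h).tendsto_atTop_zero
          · have := (hasy _ _ h).tendsto_atTop_zero
            simpa [dist_comm] using this
        have := ih.add hcd
        rw [add_zero] at this
        refine squeeze_zero (fun n => dist_nonneg) (fun n => ?_) this
        exact dist_triangle _ _ _
    have hfix1 : ∀ n, T^[n] z1 = z1 := fun n =>
      Function.iterate_fixed h1 n
    have hfix2 : ∀ n, T^[n] z2 = z2 := fun n =>
      Function.iterate_fixed h2 n
    have := key z1 z2 hrel
    simp only [hfix1, hfix2] at this
    have : dist z1 z2 = 0 := tendsto_nhds_unique tendsto_const_nhds this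
    exact dist_eq_zero.mp this
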